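/- Operator norm inequality (equation (eq.variance.eq2) in the proof of Lemma 3, abstract form). Let H₁ and H₂ be Hilbert spaces, let S : H₁ → H₂ be a bounded linear operator with C = S*S, let Ĉ be a bounded positive self-adjoint operator on H₁, and let λ > 0. Then ‖S (Ĉ + λI)^{−1} (C + λI)^{1/2}‖ ≤ ‖(C + λI)^{1/2} (Ĉ + λI)^{−1/2}‖². -/

import Mathlib

/-- **Operator norm inequality** (equation (eq.variance.eq2) in the proof of Lemma 3,
abstract form).  Let `S : H₁ → H₂` be a bounded linear operator, `C = S*S`, let `Ĉ` be a
bounded positive self-adjoint operator on `H₁` and `λ > 0`.  Square roots are given by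
the continuous functional calculus and `Chatinv` denotes the (two-sided) inverse of
`Ĉ + λI`.  Then `‖S (Ĉ + λI)⁻¹ (C + λI)^{1/2}‖ ≤ ‖(C + λI)^{1/2} (Ĉ + λI)^{-1/2}‖²`. -/
theorem statement14
    {H₁ : Type*} [NormedAddCommGroup H₁] [InnerProductSpace ℂ H₁] [CompleteSpace H₁]
    {H₂ : Type*} [NormedAddCommGroup H₂] [InnerProductSpace ℂ H₂] [CompleteSpace H₂]
    (S : H₁ →L[ℂ] H₂)
    (C : H₁ →L[ℂ] H₁) (hC : C = (ContinuousLinearMap.adjoint S).comp S)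
    (Chat : H₁ →L[ℂ] H₁)
    (hChatsa : IsSelfAdjoint Chat)
    (hChatpos : ∀ h : H₁, (0:ℝ) ≤ RCLike.re (inner ℂ (Chat h) h : ℂ))
    (lam : ℝ) (hlam : 0 < lam)
    (Chatinv : H₁ →L[ℂ] H₁)
    (hChatinv₁ : Chatinv * (Chat + (lam : ℂ) • (1 : H₁ →L[ℂ] H₁)) = 1)
    (hChatinv₂ : (Chat + (lam : ℂ) • (1 : H₁ →L[ℂ] H₁)) * Chatinv = 1) :
    ‖S.comp (Chatinv * cfc (fun x : ℝ => Real.sqrt x) (C + (lam : ℂ) • (1 : H₁ →L[ℂ] H₁)))‖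
      ≤ ‖cfc (fun x : ℝ => Real.sqrt x) (C + (lam : ℂ) • (1 : H₁ →L[ℂ] H₁))
          * cfc (fun x : ℝ => (Real.sqrt x)⁻¹) (Chat + (lam : ℂ) • (1 : H₁ →L[ℂ] H₁))‖ ^ 2 := by
  set P : H₁ →L[ℂ] H₁ := C + (lam : ℂ) • 1 with hPdef
  set Q : H₁ →L[ℂ] H₁ := Chat + (lam : ℂ) • 1 with hQdef
  -- positivity of lam • 1
  have hlam1 : (0 : H₁ →L[ℂ] H₁) ≤ (lam : ℂ) • 1 := by
    have := star_mul_self_nonneg ((Real.sqrt lam : ℂ) • (1 : H₁ →L[ℂ] H₁))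
    simpa [star_smul, smul_smul, Complex.conj_ofReal, ← Complex.ofReal_mul,
      Real.mul_self_sqrt hlam.le] using this
  -- positivity of C
  have hCpos : (0 : H₁ →L[ℂ] H₁) ≤ C := by
    rw [ContinuousLinearMap.nonneg_iff_isPositive, hC]
    have := ContinuousLinearMap.isPositive_one.conj_adjoint (ContinuousLinearMap.adjoint S)
    exact ContinuousLinearMap.isPositive_adjoint_comp_self S
  have hChat0 : (0 : H₁ →L[ℂ] H₁) ≤ Chat := by
    rw [ContinuousLinearMap.nonneg_iff_isPositive]
    exact ContinuousLinearMap.isPositive_def'.mpr ⟨hChatsa, hChatpos⟩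
  have hPpos : (0 : H₁ →L[ℂ] H₁) ≤ P := by
    calc (0 : H₁ →L[ℂ] H₁) ≤ (lam : ℂ) • 1 := hlam1
    _ ≤ P := by rw [hPdef]; exact le_add_of_nonneg_left hCpos
  have hQpos : (0 : H₁ →L[ℂ] H₁) ≤ Q := by
    calc (0 : H₁ →L[ℂ] H₁) ≤ (lam : ℂ) • 1 := hlam1
    _ ≤ Q := by rw [hQdef]; exact le_add_of_nonneg_left hChat0
  have hPsa : IsSelfAdjoint P := .of_nonneg hPpos
  have hQsa : IsSelfAdjoint Q := .of_nonneg hQpos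
  have hPspec : ∀ x ∈ spectrum ℝ P, 0 ≤ x := fun x hx => spectrum_nonneg_of_nonneg hPpos hx
  have hQspec : ∀ x ∈ spectrum ℝ Q, 0 < x := by
    intro x hx
    rcases lt_or_eq_of_le (spectrum_nonneg_of_nonneg hQpos hx) with h | h
    · exact h
    · exfalso
      rw [← h] at hx
      have hQunit : IsUnit Q := ⟨⟨Q, Chatinv, hChatinv₂, hChatinv₁⟩, rfl⟩
      exact (spectrum.zero_notMem_iff ℝ |>.mpr hQunit) hx
  set A : H₁ →L[ℂ] H₁ := cfc (fun x : ℝ => Real.sqrt x) P with hAdef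
  set B : H₁ →L[ℂ] H₁ := cfc (fun x : ℝ => (Real.sqrt x)⁻¹) Q with hBdef
  have hAsa : IsSelfAdjoint A := cfc_predicate _ P
  have hBsa : IsSelfAdjoint B := cfc_predicate _ Q
  have hsqrtc : ContinuousOn (fun x : ℝ => Real.sqrt x) (spectrum ℝ P) :=
    Real.continuous_sqrt.continuousOn
  have hinvc : ContinuousOn (fun x : ℝ => (Real.sqrt x)⁻¹) (spectrum ℝ Q) :=
    ContinuousOn.inv₀ Real.continuous_sqrt.continuousOn
      (fun x hx => Real.sqrt_ne_zero'.mpr (hQspec x hx))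
  -- A * A = P
  have hAA : A * A = P := by
    rw [hAdef, ← cfc_mul _ _ P hsqrtc hsqrtc]
    conv_rhs => rw [← cfc_id ℝ P hPsa]
    exact cfc_congr fun x hx => Real.mul_self_sqrt (hPspec x hx)
  -- B * B = Chatinv
  have hBBQ : B * B * Q = 1 := by
    have hg : ContinuousOn (fun x : ℝ => (Real.sqrt x)⁻¹ * (Real.sqrt x)⁻¹)
        (spectrum ℝ Q) := hinvc.mul hinvc
    calc B * B * Q
        = cfc (fun x : ℝ => (Real.sqrt x)⁻¹ * (Real.sqrt x)⁻¹) Q * cfc (id : ℝ → ℝ) Q := by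
          rw [hBdef, ← cfc_mul _ _ Q hinvc hinvc, cfc_id ℝ Q hQsa]
      _ = cfc (fun x : ℝ => ((Real.sqrt x)⁻¹ * (Real.sqrt x)⁻¹) * x) Q := by
          exact (cfc_mul _ _ Q hg continuousOn_id).symm
      _ = 1 := by
          rw [← cfc_one (R := ℝ) Q hQsa]
          refine cfc_congr fun x hx => ?_
          have hxpos := hQspec x hx
          have hs : Real.sqrt x ≠ 0 := Real.sqrt_ne_zero'.mpr hxpos
          have : Real.sqrt x * Real.sqrt x = x := Real.mul_self_sqrt hxpos.le
          field_simp
          simp [Real.sq_sqrt hxpos.le]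
  have hBB : B * B = Chatinv := by
    calc B * B = B * B * (Q * Chatinv) := by rw [hChatinv₂, mul_one]
      _ = (B * B * Q) * Chatinv := by noncomm_ring
      _ = Chatinv := by rw [hBBQ, one_mul]
  set M : H₁ →L[ℂ] H₁ := A * B with hMdef
  set X : H₁ →L[ℂ] H₁ := Chatinv * A with hXdef
  have hXeq : X = B * star M := by
    rw [hXdef, hMdef, ← hBB, star_mul, hAsa.star_eq, hBsa.star_eq, mul_assoc]
  have hstarX : star X = M * B := by
    rw [hXeq, star_mul, star_star, hBsa.star_eq]
  -- key: star X * C * X = M * (B * C * B) * star M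
  have hkey : star X * C * X = M * (B * C * B) * star M := by
    rw [hstarX, hXeq]; noncomm_ring
  -- inequality chain
  have hBCB_le : B * C * B ≤ star M * M := by
    have hCP : C ≤ P := by rw [hPdef]; exact le_add_of_nonneg_right hlam1
    have := star_left_conjugate_le_conjugate hCP B
    rw [hBsa.star_eq] at this
    calc B * C * B ≤ B * P * B := this
      _ = star M * M := by rw [hMdef, ← hAA, star_mul, hAsa.star_eq, hBsa.star_eq]; noncomm_ring
  have hmain : star X * C * X ≤ (M * star M) * (M * star M) := by
    rw [hkey]
    calc M * (B * C * B) * star M ≤ M * (star M * M) * star M := by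
          have := star_left_conjugate_le_conjugate hBCB_le (star M)
          rwa [star_star] at this
      _ = (M * star M) * (M * star M) := by noncomm_ring
  have hXCX_nonneg : (0 : H₁ →L[ℂ] H₁) ≤ star X * C * X := star_left_conjugate_nonneg hCpos X
  have hnorm_le : ‖star X * C * X‖ ≤ ‖(M * star M) * (M * star M)‖ :=
    CStarAlgebra.norm_le_norm_of_nonneg_of_le hXCX_nonneg hmain
  have hMM : ‖(M * star M) * (M * star M)‖ = (‖M‖ ^ 2) ^ 2 := by
    have h1 : ‖(M * star M) * (M * star M)‖ = ‖M * star M‖ * ‖M * star M‖ := by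
      nth_rewrite 1 [← (IsSelfAdjoint.mul_star_self M).star_eq]
      exact CStarRing.norm_star_mul_self
    rw [h1, CStarRing.norm_self_mul_star]; ring
  -- relate LHS to star X * C * X
  set T := S.comp X with hTdef
  have hXadj : ContinuousLinearMap.adjoint (S.comp X) ∘L (S.comp X) = star X * C * X := by
    rw [hC, ContinuousLinearMap.adjoint_comp, ContinuousLinearMap.star_eq_adjoint]
    ext v
    simp [ContinuousLinearMap.mul_def]
  have hT2 : ‖T‖ * ‖T‖ = ‖star X * C * X‖ := by
    rw [← ContinuousLinearMap.norm_adjoint_comp_self T, hTdef, hXadj]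
  have hfinal : ‖T‖ * ‖T‖ ≤ (‖M‖ ^ 2) ^ 2 := by
    rw [hT2, ← hMM]; exact hnorm_le
  have hsq : ‖T‖ ^ 2 ≤ (‖M‖ ^ 2) ^ 2 := by rw [sq]; exact hfinal
  exact (pow_le_pow_iff_left₀ (norm_nonneg T) (sq_nonneg ‖M‖) two_ne_zero).mp hsq
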